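/- Let L be a CSL on H and x ∈ H. If the projection P onto [Alg L · x] is not hyperatomic (so there is a strictly increasing sequence F₁ < F₂ < ⋯ in L with ⋁Fₙ = P), then there exists y ∈ PH such that y ≠ Tx for every T ∈ Alg L; in particular {Alg L · x} is not closed. -/

import Mathlib

noncomputable section

open scoped InnerProductSpace

variable {H : Type*} [NormedAddCommGroup H] [InnerProductSpace ℂ H] [CompleteSpace H]

/-- `P` is an orthogonal projection on `H`. -/
def IsOrthProj (P : H →L[ℂ] H) : Prop := IsSelfAdjoint P ∧ P ∘L P = P

/-- The usual order on orthogonal projections: `P ≤ Q` iff `Q P = P` (range containment). -/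
def pLE (P Q : H →L[ℂ] H) : Prop := Q ∘L P = P

/-- An atom of the lattice `L`: a nonzero interval projection `E - F` (`E, F ∈ L`, `F ≤ E`)
containing no interval projection other than `0` and itself. -/
def IsAtomOf (L : Set (H →L[ℂ] H)) (A : H →L[ℂ] H) : Prop :=
  A ≠ 0 ∧ (∃ E ∈ L, ∃ F ∈ L, pLE F E ∧ A = E - F) ∧
    ∀ E ∈ L, ∀ F ∈ L, pLE F E → pLE (E - F) A → E - F = 0 ∨ E - F = A

/-- `L` is a commutative subspace lattice (CSL): a strongly closed complete lattice of
mutually commuting orthogonal projections containing `0` and `I`.  Completeness is expressed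
by the existence, for every subset, of a member of `L` realizing the honest infimum
(intersection of ranges) and the honest supremum (closed span of ranges). -/
def IsCSL (L : Set (H →L[ℂ] H)) : Prop :=
  (∀ P ∈ L, IsOrthProj P) ∧
  (∀ P ∈ L, ∀ Q ∈ L, P ∘L Q = Q ∘L P) ∧
  (0 : H →L[ℂ] H) ∈ L ∧ (1 : H →L[ℂ] H) ∈ L ∧
  (∀ S ⊆ L, ∃ P ∈ L, (∀ Q ∈ S, pLE P Q) ∧
      LinearMap.range (P : H →ₗ[ℂ] H) = ⨅ Q ∈ S, LinearMap.range (Q : H →ₗ[ℂ] H)) ∧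
  (∀ S ⊆ L, ∃ P ∈ L, (∀ Q ∈ S, pLE Q P) ∧
      LinearMap.range (P : H →ₗ[ℂ] H) = (⨆ Q ∈ S, LinearMap.range (Q : H →ₗ[ℂ] H)).topologicalClosure)

/-- `Alg L`: the algebra of operators leaving every projection of `L` invariant. -/
def AlgL (L : Set (H →L[ℂ] H)) : Set (H →L[ℂ] H) :=
  {T | ∀ P ∈ L, (1 - P) ∘L (T ∘L P) = 0}

/-- The (not necessarily closed) orbit `{Alg L · x}` of a vector `x`. -/
def orbit (L : Set (H →L[ℂ] H)) (x : H) : Set H :=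
  {y | ∃ T ∈ AlgL L, T x = y}

/-- `P` is hyperatomic in `L`: `P = E(A₁, …, Aₖ)`, the smallest projection of `L`
dominating finitely many atoms `A₁, …, Aₖ` of `L`. -/
def HyperatomicIn (L : Set (H →L[ℂ] H)) (P : H →L[ℂ] H) : Prop :=
  ∃ (k : ℕ) (A : Fin k → H →L[ℂ] H), (∀ j, IsAtomOf L (A j)) ∧
    (∀ j, pLE (A j) P) ∧ ∀ F ∈ L, (∀ j, pLE (A j) F) → pLE P F

section Helpers

variable {H : Type*} [NormedAddCommGroup H] [InnerProductSpace ℂ H] [CompleteSpace H]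

lemma projNormLe {Q : H →L[ℂ] H} (hsa : IsSelfAdjoint Q) (hid : Q ∘L Q = Q) (z : H) :
    ‖Q z‖ ≤ ‖z‖ := by
  have hsym := ContinuousLinearMap.isSelfAdjoint_iff_isSymmetric.mp hsa
  have hQQ : Q (Q z) = Q z := by
    have := congrArg (fun T : H →L[ℂ] H => T z) hid
    simpa using this
  have h2 : ⟪Q z, Q z⟫_ℂ = ⟪z, Q z⟫_ℂ := by
    have h := (hsym z (Q z)).symm
    simp only [ContinuousLinearMap.coe_coe, hQQ] at h
    exact h.symm
  have h1 : ‖Q z‖ ^ 2 = RCLike.re (⟪z, Q z⟫_ℂ) := by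
    rw [← h2, inner_self_eq_norm_sq]
  have h3 : RCLike.re (⟪z, Q z⟫_ℂ) ≤ ‖z‖ * ‖Q z‖ :=
    le_trans (RCLike.re_le_norm _) (norm_inner_le_norm z (Q z))
  by_contra h
  push_neg at h
  nlinarith [norm_nonneg z, norm_nonneg (Q z)]

end Helpers

/-- if the projection `P` onto `[Alg L · x]` is not hyperatomic, witnessed by
a strictly increasing sequence `F₁ < F₂ < ⋯` in `L` with `⋁ Fₙ = P`, then some `y ∈ PH` is
not of the form `T x` for any `T ∈ Alg L`; in particular `{Alg L · x}` is not closed. -/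
theorem stmt8 (L : Set (H →L[ℂ] H)) (hL : IsCSL L) (x : H)
    (P : H →L[ℂ] H) (hPproj : IsOrthProj P)
    (hPrange : (LinearMap.range (P : H →ₗ[ℂ] H) : Set H) = closure (orbit L x))
    (F : ℕ → H →L[ℂ] H) (hFL : ∀ n, F n ∈ L)
    (hmono : ∀ n, pLE (F n) (F (n + 1)) ∧ F n ≠ F (n + 1))
    (hsup : ∀ z : H, Filter.Tendsto (fun n => F n z) Filter.atTop (nhds (P z))) :
    (∃ y : H, P y = y ∧ ∀ T ∈ AlgL L, T x ≠ y) ∧ ¬ IsClosed (orbit L x) := by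
  obtain ⟨hproj, hcomm, -, -, -, -⟩ := hL
  have hFsa : ∀ n, IsSelfAdjoint (F n) := fun n => (hproj _ (hFL n)).1
  have hFidA : ∀ n z, F n (F n z) = F n z := by
    intro n z
    have := congrArg (fun T : H →L[ℂ] H => T z) (hproj _ (hFL n)).2
    simpa using this
  -- bigger applied after smaller
  have hleA : ∀ m n, m ≤ n → ∀ z, F n (F m z) = F m z := by
    intro m n h
    induction n with
    | zero => obtain rfl := Nat.le_zero.mp h; exact hFidA 0
    | succ n ih =>
      rcases eq_or_lt_of_le h with rfl | h'
      · exact hFidA (n + 1)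
      · intro z
        have hm : m ≤ n := Nat.lt_succ_iff.mp h'
        have hstep : F (n + 1) ∘L F n = F n := (hmono n).1
        have hstepA : ∀ w, F (n + 1) (F n w) = F n w := by
          intro w
          have := congrArg (fun T : H →L[ℂ] H => T w) hstep
          simpa using this
        rw [← ih hm z, hstepA, ih hm z]
  -- smaller applied after bigger
  have hleB : ∀ m n, m ≤ n → ∀ z, F m (F n z) = F m z := by
    intro m n h z
    have hc := congrArg (fun T : H →L[ℂ] H => T z) (hcomm _ (hFL m) _ (hFL n))
    simp only [ContinuousLinearMap.comp_apply] at hc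
    rw [hc, hleA m n h z]
  -- F m ≤ P
  have hPF : ∀ m z, P (F m z) = F m z := by
    intro m z
    have h1 : Filter.Tendsto (fun n => F n (F m z)) Filter.atTop (nhds (P (F m z))) :=
      hsup (F m z)
    have h2 : Filter.Tendsto (fun n => F n (F m z)) Filter.atTop (nhds (F m z)) := by
      apply Filter.Tendsto.congr' _ tendsto_const_nhds
      filter_upwards [Filter.eventually_ge_atTop m] with n hn
      exact (hleA m n hn z).symm
    exact tendsto_nhds_unique h1 h2
  have hPfix : ∀ y, y ∈ closure (orbit L x) → P y = y := by
    intro y hy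
    rw [← hPrange] at hy
    obtain ⟨z, rfl⟩ := hy
    have := congrArg (fun T : H →L[ℂ] H => T z) hPproj.2
    simpa using this
  have hone : (1 : H →L[ℂ] H) ∈ AlgL L := by
    intro Q hQ
    ext z
    have := congrArg (fun T : H →L[ℂ] H => T z) (hproj Q hQ).2
    simp only [ContinuousLinearMap.comp_apply] at this
    simp [ContinuousLinearMap.comp_apply, ContinuousLinearMap.sub_apply, this]
  have hx : P x = x := hPfix x (subset_closure ⟨1, hone, rfl⟩)
  -- Alg L pointwise invariance
  have hAlg : ∀ T ∈ AlgL L, ∀ k z, F k (T (F k z)) = T (F k z) := by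
    intro T hT k z
    have := congrArg (fun S : H →L[ℂ] H => S z) (hT (F k) (hFL k))
    simp only [ContinuousLinearMap.comp_apply, ContinuousLinearMap.sub_apply,
      ContinuousLinearMap.one_apply, ContinuousLinearMap.zero_apply] at this
    exact (sub_eq_zero.mp this).symm
  -- key norm estimate for T ∈ Alg L
  have hkey : ∀ T ∈ AlgL L, ∀ k, ‖T x - F k (T x)‖ ≤ ‖T‖ * ‖x - F k x‖ := by
    intro T hT k
    have hrepr : T x - F k (T x) = T (x - F k x) - F k (T (x - F k x)) := by
      have h0 : F k (T (F k x)) = T (F k x) := hAlg T hT k x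
      have hds : T (x - F k x) = T x - T (F k x) := map_sub T x (F k x)
      have hds2 : F k (T (x - F k x)) = F k (T x) - F k (T (F k x)) := by
        rw [hds, map_sub]
      rw [hds2, hds, h0]
      abel
    have hsa : IsSelfAdjoint ((1 : H →L[ℂ] H) - F k) := (IsSelfAdjoint.one (H →L[ℂ] H)).sub (hFsa k)
    have hid : ((1 : H →L[ℂ] H) - F k) ∘L ((1 : H →L[ℂ] H) - F k) = (1 : H →L[ℂ] H) - F k := by
      ext w
      simp only [ContinuousLinearMap.comp_apply, ContinuousLinearMap.sub_apply,
        ContinuousLinearMap.one_apply, map_sub, hFidA k]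
      abel
    have hproj1 : ∀ w : H, ‖w - F k w‖ ≤ ‖w‖ := by
      intro w
      have := projNormLe hsa hid w
      simpa [ContinuousLinearMap.sub_apply] using this
    calc ‖T x - F k (T x)‖ = ‖T (x - F k x) - F k (T (x - F k x))‖ := by rw [hrepr]
      _ ≤ ‖T (x - F k x)‖ := hproj1 _
      _ ≤ ‖T‖ * ‖x - F k x‖ := T.le_opNorm _
  have key : ∃ y : H, P y = y ∧ ∀ T ∈ AlgL L, T x ≠ y := by
    by_cases hA : ∃ N, F N x = x
    · exfalso
      obtain ⟨N, hN⟩ := hA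
      have hcl : IsClosed {z : H | F N z = z} := isClosed_eq (F N).continuous continuous_id
      have hsub : orbit L x ⊆ {z : H | F N z = z} := by
        rintro w ⟨T, hT, rfl⟩
        show F N (T x) = T x
        conv_lhs => rw [← hN]
        rw [hAlg T hT N x, hN]
      have hfix : ∀ y ∈ closure (orbit L x), F N y = y :=
        fun y hy => closure_minimal hsub hcl hy
      have hFNP : ∀ z, F N (P z) = P z := by
        intro z
        apply hfix
        rw [← hPrange]
        exact ⟨z, rfl⟩
      have heq : F (N + 1) = F N := by
        ext z
        have h1 : P (F (N + 1) z) = F (N + 1) z := hPF (N + 1) z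
        have h2 : F N (P (F (N + 1) z)) = P (F (N + 1) z) := hFNP _
        rw [h1, hleB N (N + 1) (Nat.le_succ N) z] at h2
        exact h2.symm
      exact (hmono N).2 heq.symm
    · push_neg at hA
      set b : ℕ → ℝ := fun k => ‖x - F k x‖ with hb
      have hbpos : ∀ k, 0 < b k := fun k =>
        norm_pos_iff.mpr (sub_ne_zero.mpr (Ne.symm (hA k)))
      have hbtend : Filter.Tendsto b Filter.atTop (nhds 0) := by
        have h0 : Filter.Tendsto (fun n : ℕ => x - F n x) Filter.atTop (nhds (x - P x)) :=
          Filter.Tendsto.sub tendsto_const_nhds (hsup x)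
        have h := h0.norm
        rw [hx, sub_self, norm_zero] at h
        exact h
      obtain ⟨φ, hφ, hφb⟩ := Filter.extraction_forall_of_eventually
        (P := fun n k => b k < (1 / 2) ^ n / (n + 1))
        (fun n => hbtend.eventually_lt_const (by positivity))
      set G : ℕ → H →L[ℂ] H := fun n => F (φ n + 1) - F (φ n) with hG
      have hGapp : ∀ n w, G n w = F (φ n + 1) w - F (φ n) w := fun n w => rfl
      have hGid : ∀ n w, G n (G n w) = G n w := by
        intro n w
        simp only [hGapp, map_sub, hFidA, hleA (φ n) (φ n + 1) (Nat.le_succ _),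
          hleB (φ n) (φ n + 1) (Nat.le_succ _)]
        abel
      have hGzero : ∀ m n, m ≠ n → ∀ w, G n (G m w) = 0 := by
        intro m n hmn w
        rcases lt_or_gt_of_ne hmn with h | h
        · have h1 : φ m + 1 ≤ φ n := hφ h
          have h2 : φ m + 1 ≤ φ n + 1 := le_trans h1 (Nat.le_succ _)
          have h3 : φ m ≤ φ n := le_trans (Nat.le_succ _) h1
          have h4 : φ m ≤ φ n + 1 := le_trans h3 (Nat.le_succ _)
          simp only [hGapp, map_sub, hleA _ _ h1, hleA _ _ h2, hleA _ _ h3, hleA _ _ h4]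
          abel
        · have h1 : φ n + 1 ≤ φ m := hφ h
          have h2 : φ n + 1 ≤ φ m + 1 := le_trans h1 (Nat.le_succ _)
          have h3 : φ n ≤ φ m := le_trans (Nat.le_succ _) h1
          have h4 : φ n ≤ φ m + 1 := le_trans h3 (Nat.le_succ _)
          simp only [hGapp, map_sub, hleB _ _ h1, hleB _ _ h2, hleB _ _ h3, hleB _ _ h4]
          abel
      have hGsa : ∀ n, IsSelfAdjoint (G n) := fun n => (hFsa (φ n + 1)).sub (hFsa (φ n))
      have hGide : ∀ n, G n ∘L G n = G n := by
        intro n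
        ext w
        simpa [ContinuousLinearMap.comp_apply] using hGid n w
      have hGannih : ∀ n w, G n (w - F (φ n) w) = G n w := by
        intro n w
        rw [map_sub]
        have : G n (F (φ n) w) = 0 := by
          simp only [hGapp, hleA (φ n) (φ n + 1) (Nat.le_succ _), hFidA]
          abel
        rw [this, sub_zero]
      have hPG : ∀ n w, P (G n w) = G n w := by
        intro n w
        simp only [hGapp, map_sub, hPF]
      -- nonzero bands, unit vectors
      have hGne : ∀ n, ∃ w, G n w ≠ 0 := by
        intro n
        by_contra h
        push_neg at h
        have : G n = 0 := by ext w; simpa using h w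
        have : F (φ n + 1) = F (φ n) := by
          have := sub_eq_zero.mp this
          exact this
        exact (hmono (φ n)).2 this.symm
      choose zz hzz using hGne
      set e : ℕ → H := fun n => (‖G n (zz n)‖ : ℝ)⁻¹ • G n (zz n) with he
      have he1 : ∀ n, ‖e n‖ = 1 := by
        intro n
        rw [he]
        simp only [norm_smul, norm_inv, norm_norm]
        rw [inv_mul_cancel₀ (norm_ne_zero_iff.mpr (hzz n))]
      have heG : ∀ n, G n (e n) = e n := by
        intro n
        rw [he]
        simp only [ContinuousLinearMap.map_smul_of_tower]
        rw [hGid]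
      set u : ℕ → H := fun n => (((n : ℝ) + 1) * b (φ n)) • e n with hu
      have hu_norm : ∀ n : ℕ, ‖u n‖ = ((n : ℝ) + 1) * b (φ n) := by
        intro n
        rw [hu]
        simp only [norm_smul, he1, mul_one, Real.norm_eq_abs]
        exact abs_of_pos (mul_pos (by positivity) (hbpos (φ n)))
      have hu_le : ∀ n : ℕ, ‖u n‖ ≤ (1 / 2 : ℝ) ^ n := by
        intro n
        rw [hu_norm]
        have h := (lt_div_iff₀ (by positivity : (0:ℝ) < (n : ℝ) + 1)).mp (hφb n)
        calc ((n : ℝ) + 1) * b (φ n) = b (φ n) * ((n : ℝ) + 1) := mul_comm _ _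
          _ ≤ (1 / 2 : ℝ) ^ n := le_of_lt h
      have hsumm : Summable u :=
        Summable.of_norm_bounded summable_geometric_two hu_le
      set y : H := ∑' n, u n with hy
      have hGu : ∀ n m, m ≠ n → G n (u m) = 0 := by
        intro n m hmn
        rw [hu]
        simp only [ContinuousLinearMap.map_smul_of_tower]
        rw [← heG m, hGzero m n hmn, smul_zero]
      have hGun : ∀ n, G n (u n) = u n := by
        intro n
        rw [hu]
        simp only [ContinuousLinearMap.map_smul_of_tower]
        rw [heG]
      have hGy : ∀ n, G n y = u n := by
        intro n
        rw [hy, ContinuousLinearMap.map_tsum (G n) hsumm]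
        rw [tsum_eq_single n (fun m hm => hGu n m hm)]
        exact hGun n
      have hPy : P y = y := by
        rw [hy, ContinuousLinearMap.map_tsum P hsumm]
        refine tsum_congr fun n => ?_
        rw [← hGun n, hPG]
      refine ⟨y, hPy, ?_⟩
      intro T hT hTx
      have hbound : ∀ n : ℕ, ((n : ℝ) + 1) * b (φ n) ≤ ‖T‖ * b (φ n) := by
        intro n
        have h1 : ‖u n‖ ≤ ‖y - F (φ n) y‖ := by
          have e1 : G n (y - F (φ n) y) = u n := by rw [hGannih, hGy]
          have e2 := projNormLe (hGsa n) (hGide n) (y - F (φ n) y)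
          rw [e1] at e2
          exact e2
        have h2 : ‖y - F (φ n) y‖ ≤ ‖T‖ * b (φ n) := by
          rw [← hTx]
          exact hkey T hT (φ n)
        rw [← hu_norm]
        exact le_trans h1 h2
      have hfin : ∀ n : ℕ, ((n : ℝ) + 1) ≤ ‖T‖ := by
        intro n
        have := hbound n
        have hb' := hbpos (φ n)
        nlinarith
      have := hfin (Nat.ceil ‖T‖)
      have h2 : ‖T‖ ≤ (Nat.ceil ‖T‖ : ℝ) := Nat.le_ceil _
      linarith
  refine ⟨key, ?_⟩
  obtain ⟨y, hPy, hne⟩ := key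
  intro hcl
  have hyo : y ∈ orbit L x := by
    have hyc : y ∈ closure (orbit L x) := by
      rw [← hPrange]
      exact ⟨y, hPy⟩
    rwa [hcl.closure_eq] at hyc
  obtain ⟨T, hT, hTx⟩ := hyo
  exact hne T hT hTx
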